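/- The category of adaptors on nonempty sets is isomorphic, as a category, to Set₁ × Set₁^op: the assignment (X,S) ↦ (X,S) on objects and (f,g) ↦ adaptor(f,g) on morphisms is a functor Set₁ × Set₁^op → Lens that is bijective on objects and fully faithful onto the subcategory of adaptors. -/
import Mathlib


structure Lens (X S Y R : Type) where
  view : X → Y
  update : X → R → S

/-- Composition: `Lens.comp μ λ` is μ ∘ λ. -/
def Lens.comp {X S Y R Z Q : Type} (m : Lens Y R Z Q) (l : Lens X S Y R) :
    Lens X S Z Q :=
  ⟨m.view ∘ l.view, fun x q => l.update x (m.update (l.view x) q)⟩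

def Lens.idLens (X S : Type) : Lens X S X S := ⟨id, fun _ s => s⟩

def Lens.tensor {X S Y R X' S' Y' R' : Type}
    (l : Lens X S Y R) (m : Lens X' S' Y' R') :
    Lens (X × X') (S × S') (Y × Y') (R × R') :=
  ⟨fun p => (l.view p.1, m.view p.2),
   fun p r => (l.update p.1 r.1, m.update p.2 r.2)⟩

def Lens.adaptor {X S Y R : Type} (f : X → Y) (g : R → S) : Lens X S Y R :=
  ⟨f, fun _ r => g r⟩

def Lens.IsAdaptor {X S Y R : Type} (l : Lens X S Y R) : Prop :=
  ∃ g : R → S, ∀ x r, l.update x r = g r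

def Lens.counit (X S : Type) : Lens (X × S) (S × X) Unit Unit :=
  ⟨fun _ => (), fun p _ => (p.2, p.1)⟩

theorem adaptor_functor_fully_faithful {X S Y R Z Q : Type}
    [Nonempty X] [Nonempty S] [Nonempty Y] [Nonempty R] :
    (Lens.adaptor (id : X → X) (id : S → S) = Lens.idLens X S) ∧
    (∀ (f : X → Y) (g : R → S) (f' : Y → Z) (g' : Q → R),
      Lens.adaptor (f' ∘ f) (g ∘ g') =
        (Lens.adaptor f' g').comp (Lens.adaptor f g)) ∧
    Function.Bijective
      (fun fg : (X → Y) × (R → S) =>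
        (⟨Lens.adaptor fg.1 fg.2, fg.2, fun _ _ => rfl⟩ :
          {l : Lens X S Y R // l.IsAdaptor})) := by
  refine ⟨rfl, fun f g f' g' => rfl, ?_, ?_⟩
  · rintro ⟨f, g⟩ ⟨f', g'⟩ h
    have h1 : Lens.adaptor f g = Lens.adaptor f' g' := congrArg Subtype.val h
    have hv : f = f' := congrArg Lens.view h1
    have hu : (fun (_ : X) r => g r) = fun _ r => g' r := congrArg Lens.update h1
    have hg : g = g' := by
      funext r
      exact congrFun (congrFun hu (Classical.arbitrary X)) r
    simp [hv, hg]
  · rintro ⟨l, g, hg⟩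
    refine ⟨(l.view, g), ?_⟩
    apply Subtype.ext
    cases l with
    | mk v u =>
      simp only [Lens.adaptor]
      congr 1
      funext x r
      exact (hg x r).symm
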